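/- Let a > 0 satisfy b < a². Then there exists τ₀ > 0 (depending only on α, β, γ, a) such that for every 0 < τ ≤ τ₀ the following discrete maximum bound principle holds: if Q : ℕ → (real 3×3 matrices) satisfies the explicit recursion Q_{m+1} = Q_m + τ·f(Q_m) for all m, and Q₀ is symmetric and traceless with ‖Q₀‖_F ≤ a, then for every m ≥ 0 the matrix Q_m is symmetric and traceless and ‖Q_m‖_F ≤ a. -/

import Mathlib

open Matrix

attribute [local instance] Matrix.frobeniusNormedAddCommGroup Matrix.frobeniusNormedSpace

/-- The Q-tensor bulk nonlinearity:
`f(Q) = −α·Q + β·(Q² − (1/3)·trace(Q²)·I) − γ·trace(Q²)·Q`. -/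
noncomputable def fQ (α β γ : ℝ) (Q : Matrix (Fin 3) (Fin 3) ℝ) : Matrix (Fin 3) (Fin 3) ℝ :=
  -(α • Q) + β • (Q * Q - ((Matrix.trace (Q * Q)) / 3) • (1 : Matrix (Fin 3) (Fin 3) ℝ))
    - (γ * Matrix.trace (Q * Q)) • Q

/-- The Frobenius norm `‖A‖_F = (trace(Aᵀ A))^{1/2}`. -/
noncomputable def frobNorm (A : Matrix (Fin 3) (Fin 3) ℝ) : ℝ :=
  Real.sqrt (Matrix.trace (Aᵀ * A))

section aux

lemma trace_eq_sum (A B : Matrix (Fin 3) (Fin 3) ℝ) :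
    Matrix.trace (Aᵀ * B) = ∑ p : Fin 3 × Fin 3, A p.1 p.2 * B p.1 p.2 := by
  rw [Fintype.sum_prod_type]
  simp only [Matrix.trace, Matrix.mul_apply, Matrix.diag, Matrix.transpose_apply]
  exact Finset.sum_comm

lemma trace_symm (A B : Matrix (Fin 3) (Fin 3) ℝ) :
    Matrix.trace (Bᵀ * A) = Matrix.trace (Aᵀ * B) := by
  rw [trace_eq_sum, trace_eq_sum]
  simp [mul_comm]

lemma norm_eq_sqrt_trace (A : Matrix (Fin 3) (Fin 3) ℝ) :
    ‖A‖ = Real.sqrt (Matrix.trace (Aᵀ * A)) := by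
  rw [Matrix.frobenius_norm_def, Real.sqrt_eq_rpow, trace_eq_sum, Fintype.sum_prod_type]
  congr 1
  refine Finset.sum_congr rfl fun i _ => Finset.sum_congr rfl fun j _ => ?_
  rw [Real.norm_eq_abs, show ((2:ℝ) = ((2:ℕ):ℝ)) by norm_num, Real.rpow_natCast, sq_abs, sq]

lemma trace_self_nonneg (A : Matrix (Fin 3) (Fin 3) ℝ) :
    0 ≤ Matrix.trace (Aᵀ * A) := by
  rw [trace_eq_sum]
  exact Finset.sum_nonneg fun p _ => mul_self_nonneg _

lemma norm_sq_eq_trace (A : Matrix (Fin 3) (Fin 3) ℝ) :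
    ‖A‖ ^ 2 = Matrix.trace (Aᵀ * A) := by
  rw [norm_eq_sqrt_trace, Real.sq_sqrt (trace_self_nonneg A)]

lemma frobNorm_eq (A : Matrix (Fin 3) (Fin 3) ℝ) : frobNorm A = ‖A‖ :=
  (norm_eq_sqrt_trace A).symm

lemma abs_trace_le (A B : Matrix (Fin 3) (Fin 3) ℝ) :
    |Matrix.trace (Aᵀ * B)| ≤ ‖A‖ * ‖B‖ := by
  have h := Finset.sum_mul_sq_le_sq_mul_sq Finset.univ
      (fun p : Fin 3 × Fin 3 => A p.1 p.2) (fun p : Fin 3 × Fin 3 => B p.1 p.2)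
  have h1 : Matrix.trace (Aᵀ * B) ^ 2 ≤ (‖A‖ * ‖B‖) ^ 2 := by
    rw [trace_eq_sum, mul_pow, norm_sq_eq_trace, norm_sq_eq_trace, trace_eq_sum, trace_eq_sum]
    simpa [sq] using h
  have h2 : 0 ≤ ‖A‖ * ‖B‖ := mul_nonneg (norm_nonneg _) (norm_nonneg _)
  nlinarith [abs_nonneg (Matrix.trace (Aᵀ * B)), sq_abs (Matrix.trace (Aᵀ * B))]

lemma norm_add_sq' (A B : Matrix (Fin 3) (Fin 3) ℝ) :
    ‖A + B‖ ^ 2 = ‖A‖ ^ 2 + 2 * Matrix.trace (Aᵀ * B) + ‖B‖ ^ 2 := by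
  rw [norm_sq_eq_trace, norm_sq_eq_trace, norm_sq_eq_trace, Matrix.transpose_add,
    Matrix.add_mul, Matrix.mul_add, Matrix.mul_add, Matrix.trace_add, Matrix.trace_add,
    Matrix.trace_add, trace_symm A B]
  ring

lemma norm_one_eq : ‖(1 : Matrix (Fin 3) (Fin 3) ℝ)‖ = Real.sqrt 3 := by
  rw [norm_eq_sqrt_trace]
  norm_num

end aux

section keylemma

lemma key_arith (α β γ a τ q c F : ℝ) (hγ : 0 < γ) (ha : 0 < a)
    (hδ : |β| * a < α + γ * a ^ 2) (hτ0 : 0 < τ)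
    (hτ1 : τ * (4 * γ * a ^ 2) ≤ 1)
    (hτ2 : τ * (2 * (|α| * a + 2 * |β| * a ^ 2 + γ * a ^ 3)) ≤ a)
    (hτ3 : τ * (|α| * a + 2 * |β| * a ^ 2 + γ * a ^ 3) ^ 2 ≤ (α + γ * a ^ 2 - |β| * a) * a ^ 2)
    (hq0 : 0 ≤ q) (hqa : q ≤ a) (hc : |c| ≤ q ^ 3) (hF0 : 0 ≤ F)
    (hF : F ≤ |α| * a + 2 * |β| * a ^ 2 + γ * a ^ 3) :
    q ^ 2 + 2 * τ * (-(α * q ^ 2) + β * c - γ * q ^ 2 * q ^ 2) + τ ^ 2 * F ^ 2 ≤ a ^ 2 := by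
  set M : ℝ := |α| * a + 2 * |β| * a ^ 2 + γ * a ^ 3 with hM
  set δ : ℝ := α + γ * a ^ 2 - |β| * a with hδdef
  clear_value M δ
  have hM0 : 0 < M := by
    rw [hM]
    have t1 : 0 ≤ |α| * a := mul_nonneg (abs_nonneg α) ha.le
    have t2 : 0 ≤ 2 * |β| * a ^ 2 := by positivity
    have t3 : 0 < γ * a ^ 3 := by positivity
    linarith
  have hδ0 : 0 < δ := by rw [hδdef]; linarith
  have hβc : β * c ≤ |β| * q ^ 3 := by
    calc β * c ≤ |β * c| := le_abs_self _
      _ = |β| * |c| := abs_mul _ _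
      _ ≤ |β| * q ^ 3 := mul_le_mul_of_nonneg_left hc (abs_nonneg β)
  have hx0 : (0:ℝ) ≤ q ^ 2 := sq_nonneg q
  have hxa : q ^ 2 ≤ a ^ 2 := by
    rw [pow_two, pow_two]; exact mul_self_le_mul_self hq0 hqa
  have hG : -(α * q ^ 2) + |β| * q ^ 3 - γ * q ^ 2 * q ^ 2 ≤
      -(δ * q ^ 2) + γ * a ^ 2 * (a ^ 2 - q ^ 2) := by
    rw [hδdef]
    have t1 : 0 ≤ |β| * q ^ 2 * (a - q) :=
      mul_nonneg (mul_nonneg (abs_nonneg β) (sq_nonneg q)) (by linarith)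
    have t2 : 0 ≤ γ * (q ^ 2 - a ^ 2) ^ 2 := mul_nonneg hγ.le (sq_nonneg _)
    nlinarith [t1, t2]
  have hT' : -(α * q ^ 2) + β * c - γ * q ^ 2 * q ^ 2 ≤
      -(δ * q ^ 2) + γ * a ^ 2 * (a ^ 2 - q ^ 2) := by linarith
  have hτF : τ ^ 2 * F ^ 2 ≤ τ ^ 2 * M ^ 2 := by
    have hFM : F ^ 2 ≤ M ^ 2 := by
      rw [pow_two, pow_two]; exact mul_self_le_mul_self hF0 hF
    exact mul_le_mul_of_nonneg_left hFM (sq_nonneg τ)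
  have hu0 : (0:ℝ) ≤ a ^ 2 - q ^ 2 := by linarith
  have hhalf : 2 * τ * (γ * a ^ 2 * (a ^ 2 - q ^ 2)) ≤ (a ^ 2 - q ^ 2) / 2 := by
    have t1 : 0 ≤ (a ^ 2 - q ^ 2) * (1 - τ * (4 * γ * a ^ 2)) :=
      mul_nonneg hu0 (by linarith)
    nlinarith [t1]
  have h2τT : 2 * τ * (-(α * q ^ 2) + β * c - γ * q ^ 2 * q ^ 2) ≤
      2 * τ * (-(δ * q ^ 2) + γ * a ^ 2 * (a ^ 2 - q ^ 2)) :=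
    mul_le_mul_of_nonneg_left hT' (by linarith)
  rcases le_total (q ^ 2) (a ^ 2 / 2) with hcase | hcase
  · have h4 : τ ^ 2 * M ^ 2 ≤ a ^ 2 / 4 := by
      have t1 : τ * (2 * M) * (τ * (2 * M)) ≤ a * a :=
        mul_self_le_mul_self (by positivity) hτ2
      linarith [t1]
    have hp : 0 ≤ τ * δ * q ^ 2 := mul_nonneg (mul_nonneg hτ0.le hδ0.le) hx0
    linarith [h2τT, hhalf, hτF, h4, hp, hcase]
  · have h5 : τ ^ 2 * M ^ 2 ≤ 2 * τ * (δ * q ^ 2) := by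
      have t1 : τ * (τ * M ^ 2) ≤ τ * (δ * a ^ 2) := mul_le_mul_of_nonneg_left hτ3 hτ0.le
      have t2 : τ * δ * a ^ 2 ≤ τ * δ * (2 * q ^ 2) :=
        mul_le_mul_of_nonneg_left (by linarith) (mul_nonneg hτ0.le hδ0.le)
      linarith [t1, t2]
    linarith [h2τT, hhalf, hτF, h5, hu0]


lemma key (α β γ a τ : ℝ) (hγ : 0 < γ) (ha : 0 < a)
    (hδ : |β| * a < α + γ * a ^ 2) (hτ0 : 0 < τ)
    (hτ1 : τ * (4 * γ * a ^ 2) ≤ 1)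
    (hτ2 : τ * (2 * (|α| * a + 2 * |β| * a ^ 2 + γ * a ^ 3)) ≤ a)
    (hτ3 : τ * (|α| * a + 2 * |β| * a ^ 2 + γ * a ^ 3) ^ 2 ≤ (α + γ * a ^ 2 - |β| * a) * a ^ 2)
    (Q : Matrix (Fin 3) (Fin 3) ℝ) (hsym : Qᵀ = Q) (htr : Matrix.trace Q = 0)
    (hle : ‖Q‖ ≤ a) : ‖Q + τ • fQ α β γ Q‖ ≤ a := by
  set M : ℝ := |α| * a + 2 * |β| * a ^ 2 + γ * a ^ 3 with hM
  set δ : ℝ := α + γ * a ^ 2 - |β| * a with hδdef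
  clear_value M δ
  set q : ℝ := ‖Q‖ with hq
  have hq0 : 0 ≤ q := norm_nonneg Q
  clear_value q
  have hs : Matrix.trace (Q * Q) = q ^ 2 := by
    rw [hq, norm_sq_eq_trace, hsym]
  -- bound on the cubic trace term
  have hc : |Matrix.trace (Qᵀ * (Q * Q))| ≤ q ^ 3 := by
    calc |Matrix.trace (Qᵀ * (Q * Q))| ≤ ‖Q‖ * ‖Q * Q‖ := abs_trace_le _ _
      _ ≤ ‖Q‖ * (‖Q‖ * ‖Q‖) := by
          have h2 : ‖Q‖ * ‖Q * Q‖ ≤ ‖Q‖ * (‖Q‖ * ‖Q‖) :=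
            mul_le_mul_of_nonneg_left (Matrix.frobenius_norm_mul Q Q) (norm_nonneg Q)
          exact h2
      _ = q ^ 3 := by rw [← hq]; ring
  -- the inner product term
  have hT : Matrix.trace (Qᵀ * fQ α β γ Q) =
      -(α * q ^ 2) + β * Matrix.trace (Qᵀ * (Q * Q)) - γ * q ^ 2 * q ^ 2 := by
    have htrt : Matrix.trace Qᵀ = 0 := by rw [hsym]; exact htr
    have hQtQ : Matrix.trace (Qᵀ * Q) = q ^ 2 := by rw [hsym, hs]
    simp only [fQ, Matrix.mul_add, Matrix.mul_sub, Matrix.mul_neg, Matrix.mul_smul,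
      Matrix.trace_add, Matrix.trace_sub, Matrix.trace_neg, Matrix.trace_smul, Matrix.mul_one,
      smul_eq_mul, hs, hQtQ, htrt]
    ring
  -- bound on ‖fQ Q‖
  have hle' : ‖Q‖ ≤ a := hq ▸ hle
  have hqa2 : q ^ 2 ≤ a ^ 2 := by
    rw [pow_two, pow_two]; exact mul_self_le_mul_self hq0 hle
  have hqa3 : q ^ 3 ≤ a ^ 3 := pow_le_pow_left₀ hq0 hle 3
  have hQQ : ‖Q * Q‖ ≤ a ^ 2 := by
    have h := Matrix.frobenius_norm_mul Q Q
    have h2 : ‖Q‖ * ‖Q‖ ≤ a * a := mul_self_le_mul_self (norm_nonneg Q) hle'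
    have h3 : a * a = a ^ 2 := (pow_two a).symm
    linarith
  have hone : ‖(1 : Matrix (Fin 3) (Fin 3) ℝ)‖ ≤ 2 := by
    rw [norm_one_eq]
    have h4 : Real.sqrt 3 ≤ Real.sqrt 4 := Real.sqrt_le_sqrt (by norm_num)
    rwa [show (4:ℝ) = 2 ^ 2 by norm_num, Real.sqrt_sq (by norm_num : (0:ℝ) ≤ 2)] at h4
  have hone0 : 0 ≤ ‖(1 : Matrix (Fin 3) (Fin 3) ℝ)‖ := norm_nonneg _
  have hsub : ‖Q * Q - (q ^ 2 / 3) • (1 : Matrix (Fin 3) (Fin 3) ℝ)‖ ≤ 2 * a ^ 2 := by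
    have h5 := norm_sub_le (Q * Q) ((q ^ 2 / 3) • (1 : Matrix (Fin 3) (Fin 3) ℝ))
    rw [norm_smul, Real.norm_eq_abs, abs_of_nonneg (by positivity : (0:ℝ) ≤ q ^ 2 / 3)] at h5
    have hterm : q ^ 2 / 3 * ‖(1 : Matrix (Fin 3) (Fin 3) ℝ)‖ ≤ a ^ 2 / 3 * 2 :=
      mul_le_mul (by linarith) hone hone0 (by positivity)
    linarith [h5, hQQ, hterm, sq_nonneg a]
  have hF : ‖fQ α β γ Q‖ ≤ M := by
    have hfq : fQ α β γ Q = -(α • Q) + β • (Q * Q - (q ^ 2 / 3) • (1 : Matrix (Fin 3) (Fin 3) ℝ))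
        - (γ * q ^ 2) • Q := by rw [fQ, hs]
    have h6 : ‖fQ α β γ Q‖ ≤ ‖α • Q‖ + ‖β • (Q * Q - (q ^ 2 / 3) • (1 : Matrix (Fin 3) (Fin 3) ℝ))‖
        + ‖(γ * q ^ 2) • Q‖ := by
      rw [hfq]
      have t1 := norm_sub_le (-(α • Q) + β • (Q * Q - (q ^ 2 / 3) • (1 : Matrix (Fin 3) (Fin 3) ℝ)))
        ((γ * q ^ 2) • Q)
      have t2 := norm_add_le (-(α • Q)) (β • (Q * Q - (q ^ 2 / 3) • (1 : Matrix (Fin 3) (Fin 3) ℝ)))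
      rw [norm_neg] at t2
      linarith
    rw [norm_smul, norm_smul, norm_smul, Real.norm_eq_abs, Real.norm_eq_abs, Real.norm_eq_abs,
      abs_of_nonneg (by positivity : (0:ℝ) ≤ γ * q ^ 2)] at h6
    have t3 : |α| * q ≤ |α| * a := mul_le_mul_of_nonneg_left hle (abs_nonneg α)
    have t4 : |β| * ‖Q * Q - (q ^ 2 / 3) • (1 : Matrix (Fin 3) (Fin 3) ℝ)‖ ≤ |β| * (2 * a ^ 2) :=
      mul_le_mul_of_nonneg_left hsub (abs_nonneg β)
    have t5 : γ * q ^ 2 * q ≤ γ * a ^ 3 := by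
      have h7 : q ^ 2 * q ≤ a ^ 2 * a := mul_le_mul hqa2 hle hq0 (sq_nonneg a)
      calc γ * q ^ 2 * q = γ * (q ^ 2 * q) := by ring
        _ ≤ γ * (a ^ 2 * a) := mul_le_mul_of_nonneg_left h7 hγ.le
        _ = γ * a ^ 3 := by ring
    rw [hM]
    rw [← hq] at h6
    linarith
  -- expansion of the squared norm
  have hexp : ‖Q + τ • fQ α β γ Q‖ ^ 2 =
      q ^ 2 + 2 * τ * Matrix.trace (Qᵀ * fQ α β γ Q) + τ ^ 2 * ‖fQ α β γ Q‖ ^ 2 := by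
    rw [norm_add_sq' Q (τ • fQ α β γ Q)]
    have h1 : Matrix.trace (Qᵀ * (τ • fQ α β γ Q)) = τ * Matrix.trace (Qᵀ * fQ α β γ Q) := by
      rw [Matrix.mul_smul, Matrix.trace_smul, smul_eq_mul]
    have h2 : ‖τ • fQ α β γ Q‖ ^ 2 = τ ^ 2 * ‖fQ α β γ Q‖ ^ 2 := by
      rw [norm_smul, Real.norm_eq_abs, mul_pow, sq_abs]
    rw [h1, h2, ← hq]
    ring
  -- conclude via the arithmetic lemma
  have hF0 : 0 ≤ ‖fQ α β γ Q‖ := norm_nonneg _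
  have hsq : ‖Q + τ • fQ α β γ Q‖ ^ 2 ≤ a ^ 2 := by
    rw [hexp, hT]
    rw [hM] at hτ2 hF
    rw [hM, hδdef] at hτ3
    exact key_arith α β γ a τ q (Matrix.trace (Qᵀ * (Q * Q))) (‖fQ α β γ Q‖) hγ ha hδ hτ0
      hτ1 hτ2 hτ3 hq0 hle hc hF0 hF
  have h := Real.sqrt_le_sqrt hsq
  rwa [Real.sqrt_sq (norm_nonneg _), Real.sqrt_sq ha.le] at h

end keylemma

/-- Discrete maximum bound principle for the explicit first-order scheme
`Q_{m+1} = Q_m + τ·f(Q_m)`. -/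
theorem stmt14 (α β γ : ℝ) (hγ : 0 < γ) (b : ℝ) (hb : b = β ^ 2 / γ ^ 2 - 2 * α / γ)
    (a : ℝ) (ha : 0 < a) (hba : b < a ^ 2) :
    ∃ τ₀ : ℝ, 0 < τ₀ ∧
      ∀ τ : ℝ, 0 < τ → τ ≤ τ₀ →
        ∀ Q : ℕ → Matrix (Fin 3) (Fin 3) ℝ,
          (∀ m : ℕ, Q (m + 1) = Q m + τ • fQ α β γ (Q m)) →
          (Q 0)ᵀ = Q 0 → Matrix.trace (Q 0) = 0 → frobNorm (Q 0) ≤ a →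
          ∀ m : ℕ, (Q m)ᵀ = Q m ∧ Matrix.trace (Q m) = 0 ∧ frobNorm (Q m) ≤ a := by
  have hγ' : γ ≠ 0 := ne_of_gt hγ
  -- β² < γ²a² + 2αγ
  have hβ2 : β ^ 2 < γ ^ 2 * a ^ 2 + 2 * α * γ := by
    rw [hb] at hba
    have h := mul_lt_mul_of_pos_right hba (by positivity : (0:ℝ) < γ ^ 2)
    have e1 : (β ^ 2 / γ ^ 2 - 2 * α / γ) * γ ^ 2 = β ^ 2 - 2 * α * γ := by
      field_simp
    rw [e1] at h
    linarith
  have h2a : 0 < γ * a ^ 2 + 2 * α := by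
    nlinarith [sq_nonneg β]
  have hpos : 0 < α + γ * a ^ 2 := by
    have : 0 < γ * a ^ 2 := by positivity
    linarith
  have hδ : |β| * a < α + γ * a ^ 2 := by
    by_contra hcon
    push_neg at hcon
    have h1 : (α + γ * a ^ 2) ^ 2 ≤ (|β| * a) ^ 2 := by
      have := pow_le_pow_left₀ hpos.le hcon 2
      exact this
    have h2 : (|β| * a) ^ 2 = β ^ 2 * a ^ 2 := by rw [mul_pow, sq_abs]
    rw [h2] at h1
    have h3 := mul_lt_mul_of_pos_right hβ2 (mul_pos ha ha)
    nlinarith [h1, h3, sq_nonneg α]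
  set M : ℝ := |α| * a + 2 * |β| * a ^ 2 + γ * a ^ 3 with hM
  set δ : ℝ := α + γ * a ^ 2 - |β| * a with hδdef
  have hM0 : 0 < M := by
    rw [hM]
    have t1 : 0 ≤ |α| * a := mul_nonneg (abs_nonneg α) ha.le
    have t2 : 0 ≤ 2 * |β| * a ^ 2 := by positivity
    have t3 : 0 < γ * a ^ 3 := by positivity
    linarith
  have hδ0 : 0 < δ := by rw [hδdef]; linarith
  refine ⟨min (1 / (4 * γ * a ^ 2)) (min (a / (2 * M)) (δ * a ^ 2 / M ^ 2)), ?_, ?_⟩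
  · have h1 : (0:ℝ) < 1 / (4 * γ * a ^ 2) := by positivity
    have h2 : (0:ℝ) < a / (2 * M) := by positivity
    have h3 : (0:ℝ) < δ * a ^ 2 / M ^ 2 := by positivity
    exact lt_min h1 (lt_min h2 h3)
  · intro τ hτ0 hττ Q hrec hs0 ht0 hn0
    have hτ1 : τ * (4 * γ * a ^ 2) ≤ 1 := by
      have := le_trans hττ (min_le_left _ _)
      rw [le_div_iff₀ (by positivity : (0:ℝ) < 4 * γ * a ^ 2)] at this
      linarith
    have hτ2 : τ * (2 * M) ≤ a := by
      have := le_trans hττ (le_trans (min_le_right _ _) (min_le_left _ _))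
      rw [le_div_iff₀ (by positivity : (0:ℝ) < 2 * M)] at this
      linarith
    have hτ3 : τ * M ^ 2 ≤ δ * a ^ 2 := by
      have := le_trans hττ (le_trans (min_le_right _ _) (min_le_right _ _))
      rw [le_div_iff₀ (by positivity : (0:ℝ) < M ^ 2)] at this
      linarith
    intro m
    induction m with
    | zero =>
        refine ⟨hs0, ht0, hn0⟩
    | succ m ih =>
        obtain ⟨hsm, htm, hnm⟩ := ih
        have hnm' : ‖Q m‖ ≤ a := by rwa [frobNorm_eq] at hnm
        have hsf : (fQ α β γ (Q m))ᵀ = fQ α β γ (Q m) := by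
          simp only [fQ, Matrix.transpose_add, Matrix.transpose_sub, Matrix.transpose_smul,
            Matrix.transpose_neg, Matrix.transpose_mul, Matrix.transpose_one, hsm]
        have htf : Matrix.trace (fQ α β γ (Q m)) = 0 := by
          simp only [fQ, Matrix.trace_add, Matrix.trace_sub, Matrix.trace_smul, Matrix.trace_neg,
            Matrix.trace_one, htm, smul_eq_mul, Fintype.card_fin]
          push_cast
          ring
        refine ⟨?_, ?_, ?_⟩
        · rw [hrec m, Matrix.transpose_add, Matrix.transpose_smul, hsm, hsf]
        · rw [hrec m, Matrix.trace_add, Matrix.trace_smul, htm, htf, smul_eq_mul]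
          ring
        · rw [hrec m, frobNorm_eq]
          exact key α β γ a τ hγ ha hδ hτ0 hτ1 hτ2 hτ3 (Q m) hsm htm hnm'
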